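/- Let $X \subseteq \mathbb{R}^n$ be convex and $f : X \to \mathbb{R}$ convex and differentiable. Let $(x^t)_{t \ge 0}$ and $(w^t)_{t \ge 1}$ be sequences in $X$ with $w^t = \frac{R^t}{\beta^t} x^t - \frac{R^{t-1}}{\beta^t} x^{t-1}$ where $\beta^t = t$ and $R^t = \sum_{s=1}^{t} \beta^s$. Then for any $p \in X$: $\sum_{t=1}^{T} \beta^t \langle \nabla f(x^t), w^t - p\rangle \ge R^T\,\big(f(x^T) - f(p)\big)$. -/

import Mathlib

open scoped RealInnerProductSpace
open Filter

/-- Gradient inequality for convex functions: `f z - f y ≤ ⟪g z, z - y⟫`. -/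
lemma grad_ineq_aux {E : Type*} [NormedAddCommGroup E] [InnerProductSpace ℝ E] [CompleteSpace E]
    {X : Set E} {f : E → ℝ} (hf : ConvexOn ℝ X f)
    {z y gz : E} (hz : z ∈ X) (hy : y ∈ X) (hg : HasGradientAt f gz z) :
    f z - f y ≤ ⟪gz, z - y⟫ := by
  -- derivative of φ t = f (z + t • (y - z)) at 0 is ⟪gz, y - z⟫
  have hc : HasDerivAt (fun t : ℝ => z + t • (y - z)) (y - z) 0 := by
    simpa using ((hasDerivAt_id (0:ℝ)).smul_const (y - z)).const_add z
  have hφ : HasDerivAt (fun t : ℝ => f (z + t • (y - z))) ⟪gz, y - z⟫ 0 := by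
    have hz0 : HasFDerivAt f ((InnerProductSpace.toDual ℝ E) gz) (z + (0:ℝ) • (y - z)) := by
      simpa using hg.hasFDerivAt
    have := hz0.comp_hasDerivAt 0 hc
    simp at this
    exact this
  have hslope : Tendsto (slope (fun t : ℝ => f (z + t • (y - z))) 0) (nhdsWithin 0 {0}ᶜ)
      (nhds ⟪gz, y - z⟫) := hasDerivAt_iff_tendsto_slope.mp hφ
  have hle : ⟪gz, y - z⟫ ≤ f y - f z := by
    have hsub : Set.Ioi (0:ℝ) ⊆ {0}ᶜ := fun t ht h => (Set.mem_Ioi.mp ht).ne' h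
    have h2 : Tendsto (slope (fun t : ℝ => f (z + t • (y - z))) 0)
        (nhdsWithin 0 (Set.Ioi 0)) (nhds ⟪gz, y - z⟫) :=
      hslope.mono_left (nhdsWithin_mono 0 hsub)
    refine le_of_tendsto h2 ?_
    · filter_upwards [Ioc_mem_nhdsGT_of_mem (Set.left_mem_Ico.mpr one_pos)] with t ht
      obtain ⟨ht0, ht1⟩ := ht
      have hconv : f (z + t • (y - z)) ≤ (1 - t) * f z + t * f y := by
        have := hf.2 hz hy (by linarith : (0:ℝ) ≤ 1 - t) (le_of_lt ht0) (by ring)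
        have hpt : (1 - t) • z + t • y = z + t • (y - z) := by
          simp [smul_sub, sub_smul]; abel
        rw [hpt] at this
        simpa using this
      rw [slope_def_field]
      simp only [zero_smul, add_zero, sub_zero]
      rw [div_le_iff₀ ht0]
      nlinarith
  have : ⟪gz, z - y⟫ = -⟪gz, y - z⟫ := by
    rw [← inner_neg_right]; congr 1; abel
  linarith [hle, this.ge, this.le]


/-- Weighted-average regret-to-gap conversion: with `β t = t`, `R t = ∑_{s=1}^t β s`,
and `w t = (R t • x t - R (t-1) • x (t-1)) / β t`, for a convex differentiable `f` on a
convex set `X` containing the iterates, and any `p ∈ X`,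
`∑_{t=1}^T β t ⟪∇f(x t), w t - p⟫ ≥ R T (f (x T) - f p)`. -/
theorem weighted_regret_to_gap {n : ℕ}
    (X : Set (EuclideanSpace ℝ (Fin n))) (hX : Convex ℝ X)
    (f : EuclideanSpace ℝ (Fin n) → ℝ) (hf : ConvexOn ℝ X f)
    (g : EuclideanSpace ℝ (Fin n) → EuclideanSpace ℝ (Fin n))
    (hg : ∀ z ∈ X, HasGradientAt f (g z) z)
    (R : ℕ → ℝ) (hR : ∀ t, R t = ∑ s ∈ Finset.Icc 1 t, (s : ℝ))
    (x w : ℕ → EuclideanSpace ℝ (Fin n)) (hx : ∀ t, x t ∈ X)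
    (hw : ∀ t : ℕ, 1 ≤ t →
      w t = ((t : ℝ))⁻¹ • (R t • x t - R (t - 1) • x (t - 1)))
    (T : ℕ) (p : EuclideanSpace ℝ (Fin n)) (hp : p ∈ X) :
    R T * (f (x T) - f p)
      ≤ ∑ t ∈ Finset.Icc 1 T, (t : ℝ) * ⟪g (x t), w t - p⟫ := by
  induction T with
  | zero => simp [hR 0]
  | succ T ih =>
    have hRsucc : R (T + 1) = R T + (T + 1 : ℝ) := by
      rw [hR, hR, Finset.sum_Icc_succ_top (Nat.le_add_left 1 T)]
      push_cast; ring
    have hRnn : 0 ≤ R T := by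
      rw [hR]; exact Finset.sum_nonneg fun s _ => by positivity
    have hT0 : ((T + 1 : ℕ) : ℝ) ≠ 0 := by positivity
    rw [Finset.sum_Icc_succ_top (Nat.le_add_left 1 T)]
    -- key algebraic identity for the last term
    have hwkey : ((T + 1 : ℕ) : ℝ) * ⟪g (x (T + 1)), w (T + 1) - p⟫
        = R T * ⟪g (x (T + 1)), x (T + 1) - x T⟫
          + ((T + 1 : ℕ) : ℝ) * ⟪g (x (T + 1)), x (T + 1) - p⟫ := by
      rw [hw (T + 1) (Nat.le_add_left 1 T)]
      simp only [Nat.add_sub_cancel, inner_sub_right, inner_smul_right, real_inner_smul_right]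
      rw [hRsucc]
      push_cast
      field_simp
      ring
    have h1 : f (x (T + 1)) - f (x T) ≤ ⟪g (x (T + 1)), x (T + 1) - x T⟫ :=
      grad_ineq_aux hf (hx (T + 1)) (hx T) (hg _ (hx (T + 1)))
    have h2 : f (x (T + 1)) - f p ≤ ⟪g (x (T + 1)), x (T + 1) - p⟫ :=
      grad_ineq_aux hf (hx (T + 1)) hp (hg _ (hx (T + 1)))
    have hTpos : (0:ℝ) ≤ ((T + 1 : ℕ) : ℝ) := by positivity
    have hm1 := mul_le_mul_of_nonneg_left h1 hRnn
    have hm2 := mul_le_mul_of_nonneg_left h2 hTpos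
    rw [hRsucc]
    push_cast at *
    nlinarith [hm1, hm2, hwkey, ih]
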